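/- Let Φ : ℝ^N → (−∞, +∞] be proper, lower semicontinuous, and convex. If the proximal operator prox_Φ is antisymmetric (prox_Φ(−x) = −prox_Φ(x) for all x), then the subdifferential is symmetric in the sense that u ∈ ∂Φ(x) if and only if −u ∈ ∂Φ(−x), and consequently Φ(−x) = Φ(x) for all x. -/

import Mathlib

open scoped RealInnerProductSpace
open Filter Set

namespace SymmProxAux

variable {N : ℕ}
local notation "E" => EuclideanSpace ℝ (Fin N)

def Subgrad (Φ : E → EReal) (x u : E) : Prop :=
  ∀ y, Φ x + ((inner ℝ u (y - x) : ℝ) : EReal) ≤ Φ y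

noncomputable def env (Φ : E → EReal) (p : E → E) (x : E) : ℝ :=
  (Φ (p x)).toReal + ‖p x - x‖ ^ 2 / 2

noncomputable def sfn (Φ : E → EReal) (p : E → E) (z x : E) : ℝ :=
  env Φ p z + (inner ℝ (z - p z) (x - z) : ℝ) + ‖z - p z‖ ^ 2 / 2

lemma coe_add_ne_top {a : EReal} (h : a ≠ ⊤) (r : ℝ) : a + (r : EReal) ≠ ⊤ := by
  induction a using EReal.rec with
  | bot => simp
  | coe a => exact_mod_cast EReal.coe_ne_top (a + r)
  | top => exact absurd rfl h

lemma exists_real {a : EReal} (h : a ≠ ⊤) (h' : a ≠ ⊥) : ∃ r : ℝ, a = (r : EReal) :=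
  ⟨a.toReal, (EReal.coe_toReal h h').symm⟩

lemma ne_top_of_min {Φ : E → EReal} (hproper : ∃ x, Φ x ≠ ⊤) {v : E} {c : ℝ} {f : E → ℝ}
    (hmin : ∀ w, Φ v + (c : EReal) ≤ Φ w + ((f w : ℝ) : EReal)) : Φ v ≠ ⊤ := by
  obtain ⟨w, hw⟩ := hproper
  intro h
  have := hmin w
  rw [h, EReal.top_add_coe] at this
  exact coe_add_ne_top hw (f w) (top_le_iff.1 this)

/-- Claim B: a minimizer of `Φ + ‖· - z‖²/(2λ)` has subgradient `(z - v)/λ`. -/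
lemma subgrad_of_min {Φ : E → EReal} (hproper : ∃ x, Φ x ≠ ⊤) (hbot : ∀ x, Φ x ≠ ⊥)
    (hconv : ∀ x y : E, ∀ t : ℝ, 0 ≤ t → t ≤ 1 →
      Φ (t • x + (1 - t) • y) ≤ (t : EReal) * Φ x + ((1 - t : ℝ) : EReal) * Φ y)
    {v z : E} {lam : ℝ} (hlam : 0 < lam)
    (hmin : ∀ w, Φ v + ((‖v - z‖ ^ 2 / (2 * lam) : ℝ) : EReal)
      ≤ Φ w + ((‖w - z‖ ^ 2 / (2 * lam) : ℝ) : EReal)) :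
    Subgrad Φ v (lam⁻¹ • (z - v)) := by
  have hvtop : Φ v ≠ ⊤ := ne_top_of_min hproper hmin
  obtain ⟨a, ha⟩ := exists_real hvtop (hbot v)
  intro y
  by_cases hy : Φ y = ⊤
  · rw [hy]; exact le_top
  obtain ⟨b, hb⟩ := exists_real hy (hbot y)
  set I : ℝ := inner ℝ (z - v) (y - v) with hI
  set Q : ℝ := ‖y - v‖ ^ 2 with hQ
  have key : ∀ t : ℝ, 0 < t → t ≤ 1 →
      a + lam⁻¹ * I ≤ b + t * (Q / (2 * lam)) := by
    intro t ht ht1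
    have hc := hconv y v t ht.le ht1
    have hm := hmin (t • y + (1 - t) • v)
    have hchain : Φ v + ((‖v - z‖ ^ 2 / (2 * lam) : ℝ) : EReal)
        ≤ (t : EReal) * Φ y + ((1 - t : ℝ) : EReal) * Φ v
          + ((‖(t • y + (1 - t) • v) - z‖ ^ 2 / (2 * lam) : ℝ) : EReal) :=
      le_trans hm (add_le_add_left hc _)
    rw [ha, hb] at hchain
    have hreal : a + ‖v - z‖ ^ 2 / (2 * lam)
        ≤ t * b + (1 - t) * a + ‖(t • y + (1 - t) • v) - z‖ ^ 2 / (2 * lam) := by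
      exact_mod_cast hchain
    have hvec : (t • y + (1 - t) • v) - z = (v - z) + t • (y - v) := by
      module
    have hexp : ‖(t • y + (1 - t) • v) - z‖ ^ 2
        = ‖v - z‖ ^ 2 - 2 * t * I + t ^ 2 * Q := by
      rw [hvec, norm_add_sq_real, real_inner_smul_right, norm_smul, mul_pow,
        Real.norm_eq_abs, sq_abs, hI, hQ]
      have : inner ℝ (v - z) (y - v) = -(inner ℝ (z - v) (y - v) : ℝ) := by
        rw [← inner_neg_left, neg_sub]
      rw [this]; ring
    rw [hexp] at hreal
    have h2lam : 0 < 2 * lam := by linarith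
    have hlamne : lam ≠ 0 := ne_of_gt hlam
    have htne : t ≠ 0 := ne_of_gt ht
    have h1 : 0 ≤ 2 * lam * t * (b - a) - 2 * t * I + t ^ 2 * Q := by
      have hr2 : (a + ‖v - z‖ ^ 2 / (2 * lam)) * (2 * lam)
          ≤ (t * b + (1 - t) * a + (‖v - z‖ ^ 2 - 2 * t * I + t ^ 2 * Q) / (2 * lam)) * (2 * lam) :=
        mul_le_mul_of_nonneg_right hreal h2lam.le
      field_simp at hr2
      nlinarith [hr2]
    rw [← sub_nonneg]
    have hexpr : b + t * (Q / (2 * lam)) - (a + lam⁻¹ * I)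
        = (2 * lam * t * (b - a) - 2 * t * I + t ^ 2 * Q) / (2 * lam * t) := by
      field_simp
      ring
    rw [hexpr]
    positivity
  have hlim : Tendsto (fun n : ℕ => b + (1 / ((n : ℝ) + 1)) * (Q / (2 * lam)))
      Filter.atTop (nhds (b + 0 * (Q / (2 * lam)))) := by
    exact Filter.Tendsto.add tendsto_const_nhds
      (Filter.Tendsto.mul_const _ tendsto_one_div_add_atTop_nhds_zero_nat)
  have hfin : a + lam⁻¹ * I ≤ b := by
    have hev : ∀ n : ℕ, a + lam⁻¹ * I ≤ b + (1 / ((n : ℝ) + 1)) * (Q / (2 * lam)) := by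
      intro n
      have hn0 : (0:ℝ) ≤ (n : ℝ) := Nat.cast_nonneg n
      refine key _ (by positivity) ?_
      rw [div_le_one (by positivity)]
      linarith
    have := ge_of_tendsto hlim (Filter.Eventually.of_forall hev)
    simpa using this
  rw [ha, hb]
  have : (inner ℝ (lam⁻¹ • (z - v)) (y - v) : ℝ) = lam⁻¹ * I := by
    rw [real_inner_smul_left, hI]
  rw [this]
  exact_mod_cast hfin


/-- Claim A: if `u ∈ ∂Φ(x)` then `x` is the prox of `x + u`. -/
lemma prox_eq_of_subgrad {Φ : E → EReal} {p : E → E}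
    (hprox : ∀ x u : E, u = p x ↔
      ∀ w, Φ u + ((‖u - x‖ ^ 2 / 2 : ℝ) : EReal) ≤ Φ w + ((‖w - x‖ ^ 2 / 2 : ℝ) : EReal))
    {x u : E} (h : Subgrad Φ x u) : p (x + u) = x := by
  refine ((hprox (x + u) x).mpr ?_).symm
  intro w
  have h1 := h w
  have hre : ‖x - (x + u)‖ ^ 2 / 2
      ≤ (inner ℝ u (w - x) : ℝ) + ‖w - (x + u)‖ ^ 2 / 2 := by
    have e1 : x - (x + u) = -u := by abel
    have e2 : w - (x + u) = (w - x) - u := by abel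
    rw [e1, e2, norm_neg, norm_sub_sq_real]
    have : (inner ℝ (w - x) u : ℝ) = inner ℝ u (w - x) := real_inner_comm _ _
    nlinarith [sq_nonneg ‖w - x‖]
  calc Φ x + ((‖x - (x + u)‖ ^ 2 / 2 : ℝ) : EReal)
      ≤ Φ x + (((inner ℝ u (w - x) : ℝ) + ‖w - (x + u)‖ ^ 2 / 2 : ℝ) : EReal) := by
        exact add_le_add_right (EReal.coe_le_coe_iff.mpr hre) _
    _ = (Φ x + ((inner ℝ u (w - x) : ℝ) : EReal)) + ((‖w - (x + u)‖ ^ 2 / 2 : ℝ) : EReal) := by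
        rw [EReal.coe_add, add_assoc]
    _ ≤ Φ w + ((‖w - (x + u)‖ ^ 2 / 2 : ℝ) : EReal) := add_le_add_left h1 _




lemma subgrad_prox {Φ : E → EReal} {p : E → E} (hproper : ∃ x, Φ x ≠ ⊤) (hbot : ∀ x, Φ x ≠ ⊥)
    (hconv : ∀ x y : E, ∀ t : ℝ, 0 ≤ t → t ≤ 1 →
      Φ (t • x + (1 - t) • y) ≤ (t : EReal) * Φ x + ((1 - t : ℝ) : EReal) * Φ y)
    (hprox : ∀ x u : E, u = p x ↔
      ∀ w, Φ u + ((‖u - x‖ ^ 2 / 2 : ℝ) : EReal) ≤ Φ w + ((‖w - x‖ ^ 2 / 2 : ℝ) : EReal))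
    (x : E) : Subgrad Φ (p x) (x - p x) := by
  have hmin := (hprox x (p x)).mp rfl
  have hmin' : ∀ w, Φ (p x) + ((‖p x - x‖ ^ 2 / (2 * 1) : ℝ) : EReal)
      ≤ Φ w + ((‖w - x‖ ^ 2 / (2 * 1) : ℝ) : EReal) := by
    simpa only [mul_one] using hmin
  have := subgrad_of_min hproper hbot hconv one_pos hmin'
  simpa using this

lemma subgrad_symm {Φ : E → EReal} {p : E → E} (hproper : ∃ x, Φ x ≠ ⊤) (hbot : ∀ x, Φ x ≠ ⊥)
    (hconv : ∀ x y : E, ∀ t : ℝ, 0 ≤ t → t ≤ 1 →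
      Φ (t • x + (1 - t) • y) ≤ (t : EReal) * Φ x + ((1 - t : ℝ) : EReal) * Φ y)
    (hprox : ∀ x u : E, u = p x ↔
      ∀ w, Φ u + ((‖u - x‖ ^ 2 / 2 : ℝ) : EReal) ≤ Φ w + ((‖w - x‖ ^ 2 / 2 : ℝ) : EReal))
    (hanti : ∀ x, p (-x) = -p x)
    {x u : E} (h : Subgrad Φ x u) : Subgrad Φ (-x) (-u) := by
  have hp : p (x + u) = x := prox_eq_of_subgrad hprox h
  have hp' : p (-(x + u)) = -x := by rw [hanti, hp]
  have hmin := (hprox (-(x + u)) (-x)).mp hp'.symm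
  have hmin' : ∀ w, Φ (-x) + ((‖-x - -(x + u)‖ ^ 2 / (2 * 1) : ℝ) : EReal)
      ≤ Φ w + ((‖w - -(x + u)‖ ^ 2 / (2 * 1) : ℝ) : EReal) := by
    simpa only [mul_one] using hmin
  have h2 := subgrad_of_min hproper hbot hconv one_pos hmin'
  have heq : (1 : ℝ)⁻¹ • (-(x + u) - -x) = -u := by
    rw [inv_one, one_smul]; abel
  rwa [heq] at h2

lemma subgrad_mono {Φ : E → EReal} (hproper : ∃ x, Φ x ≠ ⊤) (hbot : ∀ x, Φ x ≠ ⊥)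
    {x y ux uy : E} (hx : Subgrad Φ x ux) (hy : Subgrad Φ y uy) :
    (0 : ℝ) ≤ inner ℝ (ux - uy) (x - y) := by
  have hxt : Φ x ≠ ⊤ := by
    obtain ⟨w, hw⟩ := hproper
    intro hc
    have := hx w
    rw [hc, EReal.top_add_coe] at this
    exact hw (top_le_iff.1 this)
  have hyt : Φ y ≠ ⊤ := by
    obtain ⟨w, hw⟩ := hproper
    intro hc
    have := hy w
    rw [hc, EReal.top_add_coe] at this
    exact hw (top_le_iff.1 this)
  obtain ⟨a, ha⟩ : ∃ r : ℝ, Φ x = (r : EReal) := ⟨_, (EReal.coe_toReal hxt (hbot x)).symm⟩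
  obtain ⟨b, hb⟩ : ∃ r : ℝ, Φ y = (r : EReal) := ⟨_, (EReal.coe_toReal hyt (hbot y)).symm⟩
  have h1 := hx y; have h2 := hy x
  rw [ha, hb] at h1 h2
  have h1' : a + (inner ℝ ux (y - x) : ℝ) ≤ b := by exact_mod_cast h1
  have h2' : b + (inner ℝ uy (x - y) : ℝ) ≤ a := by exact_mod_cast h2
  have e1 : (inner ℝ ux (y - x) : ℝ) = -(inner ℝ ux (x - y) : ℝ) := by
    rw [← inner_neg_right, neg_sub]
  rw [inner_sub_left]
  rw [e1] at h1'
  linarith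

lemma prox_contract {Φ : E → EReal} {p : E → E} (hproper : ∃ x, Φ x ≠ ⊤) (hbot : ∀ x, Φ x ≠ ⊥)
    (hconv : ∀ x y : E, ∀ t : ℝ, 0 ≤ t → t ≤ 1 →
      Φ (t • x + (1 - t) • y) ≤ (t : EReal) * Φ x + ((1 - t : ℝ) : EReal) * Φ y)
    (hprox : ∀ x u : E, u = p x ↔
      ∀ w, Φ u + ((‖u - x‖ ^ 2 / 2 : ℝ) : EReal) ≤ Φ w + ((‖w - x‖ ^ 2 / 2 : ℝ) : EReal))
    (x y : E) : (inner ℝ (p x - p y) (x - y) : ℝ) ≤ ‖x - y‖ ^ 2 := by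
  have h := subgrad_mono hproper hbot
    (subgrad_prox hproper hbot hconv hprox x) (subgrad_prox hproper hbot hconv hprox y)
  have hvec : (x - p x) - (y - p y) = (x - y) - (p x - p y) := by abel
  rw [hvec, inner_sub_left, real_inner_self_eq_norm_sq] at h
  -- h : 0 ≤ ⟪x - y, p x - p y⟫ - ‖p x - p y‖ ^ 2
  have hcs : (inner ℝ (x - y) (p x - p y) : ℝ) ≤ ‖x - y‖ * ‖p x - p y‖ := real_inner_le_norm _ _
  have hcomm : (inner ℝ (p x - p y) (x - y) : ℝ) = inner ℝ (x - y) (p x - p y) :=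
    real_inner_comm _ _
  rw [hcomm]
  nlinarith [norm_nonneg (x - y), norm_nonneg (p x - p y),
    sq_nonneg (‖x - y‖ - ‖p x - p y‖)]



lemma prox_ne_top {Φ : E → EReal} {p : E → E} (hproper : ∃ x, Φ x ≠ ⊤)
    (hprox : ∀ x u : E, u = p x ↔
      ∀ w, Φ u + ((‖u - x‖ ^ 2 / 2 : ℝ) : EReal) ≤ Φ w + ((‖w - x‖ ^ 2 / 2 : ℝ) : EReal))
    (x : E) : Φ (p x) ≠ ⊤ := by
  obtain ⟨w, hw⟩ := hproper
  intro h
  have := (hprox x (p x)).mp rfl w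
  rw [h, EReal.top_add_coe] at this
  exact coe_add_ne_top hw _ (top_le_iff.1 this)

lemma env_coe {Φ : E → EReal} {p : E → E} (hproper : ∃ x, Φ x ≠ ⊤) (hbot : ∀ x, Φ x ≠ ⊥)
    (hprox : ∀ x u : E, u = p x ↔
      ∀ w, Φ u + ((‖u - x‖ ^ 2 / 2 : ℝ) : EReal) ≤ Φ w + ((‖w - x‖ ^ 2 / 2 : ℝ) : EReal))
    (x : E) : Φ (p x) = (((Φ (p x)).toReal : ℝ) : EReal) :=
  (EReal.coe_toReal (prox_ne_top hproper hprox x) (hbot (p x))).symm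

lemma env_le {Φ : E → EReal} {p : E → E} (hproper : ∃ x, Φ x ≠ ⊤) (hbot : ∀ x, Φ x ≠ ⊥)
    (hprox : ∀ x u : E, u = p x ↔
      ∀ w, Φ u + ((‖u - x‖ ^ 2 / 2 : ℝ) : EReal) ≤ Φ w + ((‖w - x‖ ^ 2 / 2 : ℝ) : EReal))
    (x y : E) :
    env Φ p y ≤ env Φ p x + (inner ℝ (x - p x) (y - x) : ℝ) + ‖y - x‖ ^ 2 / 2 := by
  have hmin := (hprox y (p y)).mp rfl (p x)
  rw [env_coe hproper hbot hprox y, env_coe hproper hbot hprox x] at hmin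
  have hre : (Φ (p y)).toReal + ‖p y - y‖ ^ 2 / 2
      ≤ (Φ (p x)).toReal + ‖p x - y‖ ^ 2 / 2 := by exact_mod_cast hmin
  have hvec : p x - y = (p x - x) - (y - x) := by abel
  have hexp : ‖p x - y‖ ^ 2 = ‖p x - x‖ ^ 2 - 2 * inner ℝ (p x - x) (y - x) + ‖y - x‖ ^ 2 := by
    rw [hvec, norm_sub_sq_real]
  have hinner : (inner ℝ (x - p x) (y - x) : ℝ) = -(inner ℝ (p x - x) (y - x) : ℝ) := by
    rw [← inner_neg_left, neg_sub]
  unfold env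
  rw [hinner]
  rw [hexp] at hre
  linarith

lemma envE_bound {Φ : E → EReal} {p : E → E} (hproper : ∃ x, Φ x ≠ ⊤) (hbot : ∀ x, Φ x ≠ ⊥)
    (hconv : ∀ x y : E, ∀ t : ℝ, 0 ≤ t → t ≤ 1 →
      Φ (t • x + (1 - t) • y) ≤ (t : EReal) * Φ x + ((1 - t : ℝ) : EReal) * Φ y)
    (hprox : ∀ x u : E, u = p x ↔
      ∀ w, Φ u + ((‖u - x‖ ^ 2 / 2 : ℝ) : EReal) ≤ Φ w + ((‖w - x‖ ^ 2 / 2 : ℝ) : EReal))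
    (hanti : ∀ x, p (-x) = -p x) (x y : E) :
    (env Φ p y - env Φ p (-y)) - (env Φ p x - env Φ p (-x)) ≤ ‖y - x‖ ^ 2 := by
  have h1 := env_le hproper hbot hprox x y
  have h2 := env_le hproper hbot hprox (-y) (-x)
  rw [hanti y] at h2
  have hn : ‖-x - -y‖ = ‖y - x‖ := by rw [show -x - -y = y - x by abel]
  rw [hn] at h2
  have hi2 : (inner ℝ (-y - -p y) (-x - -y) : ℝ) = -(inner ℝ (y - p y) (y - x) : ℝ) := by
    rw [show -y - -p y = -(y - p y) by abel, show -x - -y = y - x by abel, inner_neg_left]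
  rw [hi2] at h2
  have h3 := prox_contract hproper hbot hconv hprox y x
  have hiq : (inner ℝ (x - p x) (y - x) : ℝ) - (inner ℝ (y - p y) (y - x) : ℝ)
      = (inner ℝ (p y - p x) (y - x) : ℝ) - ‖y - x‖ ^ 2 := by
    have hv : (x - p x) - (y - p y) = (p y - p x) - (y - x) := by abel
    rw [← inner_sub_left, hv, inner_sub_left, real_inner_self_eq_norm_sq]
  linarith


lemma env_symm_of_bound (Φ : E → EReal) (p : E → E)
    (hb : ∀ x y : E, (env Φ p y - env Φ p (-y)) - (env Φ p x - env Φ p (-x)) ≤ ‖y - x‖ ^ 2)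
    (x : E) : env Φ p (-x) = env Φ p x := by
  set EE : E → ℝ := fun x => env Φ p x - env Φ p (-x) with hEE
  have habs : ∀ a b : E, |EE b - EE a| ≤ ‖b - a‖ ^ 2 := by
    intro a b
    rw [abs_le]
    constructor
    · have := hb b a
      have hn : ‖a - b‖ = ‖b - a‖ := norm_sub_rev a b
      simp only [hEE] at this ⊢
      rw [hn] at this
      linarith
    · exact hb a b
  have hE0 : EE 0 = 0 := by simp [hEE]
  have hchain : ∀ n : ℕ, 0 < n → |EE x| ≤ ‖x‖ ^ 2 / n := by
    intro n hn
    have hnR : (0 : ℝ) < n := Nat.cast_pos.mpr hn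
    set z : ℕ → E := fun i => ((i : ℝ) / n) • x with hz
    have hstep : ∀ i : ℕ, |EE (z (i + 1)) - EE (z i)| ≤ ‖x‖ ^ 2 / n ^ 2 := by
      intro i
      have hdiff : z (i + 1) - z i = ((1 : ℝ) / n) • x := by
        rw [hz]
        simp only
        rw [← sub_smul]
        congr 1
        push_cast
        field_simp
        ring
      have := habs (z i) (z (i + 1))
      rw [hdiff, norm_smul, mul_pow, Real.norm_eq_abs, sq_abs] at this
      calc |EE (z (i + 1)) - EE (z i)| ≤ (1 / (n : ℝ)) ^ 2 * ‖x‖ ^ 2 := this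
        _ = ‖x‖ ^ 2 / n ^ 2 := by field_simp
    have hind : ∀ i : ℕ, |EE (z i)| ≤ i * (‖x‖ ^ 2 / n ^ 2) := by
      intro i
      induction i with
      | zero => simp [hz, hE0]
      | succ k ih =>
        have h1 : |EE (z (k + 1))| ≤ |EE (z (k + 1)) - EE (z k)| + |EE (z k)| := by
          calc |EE (z (k+1))| = |(EE (z (k+1)) - EE (z k)) + EE (z k)| := by ring_nf
            _ ≤ _ := abs_add_le _ _
        have := hstep k
        push_cast
        linarith
    have hzn : z n = x := by
      rw [hz]
      simp only
      rw [div_self (ne_of_gt hnR), one_smul]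
    have := hind n
    rw [hzn] at this
    calc |EE x| ≤ n * (‖x‖ ^ 2 / n ^ 2) := this
      _ = ‖x‖ ^ 2 / n := by field_simp
  have hzero : EE x = 0 := by
    by_contra hne
    have hpos : 0 < |EE x| := abs_pos.mpr hne
    obtain ⟨n, hn⟩ := exists_nat_gt (‖x‖ ^ 2 / |EE x|)
    have hn0 : 0 < n := by
      by_contra hc
      push_neg at hc
      interval_cases n
      · simp only [Nat.cast_zero] at hn
        exact absurd hn (not_lt.mpr (by positivity))
    have h2 := hchain n hn0
    have hnR : (0 : ℝ) < n := Nat.cast_pos.mpr hn0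
    rw [div_lt_iff₀ hpos] at hn
    rw [le_div_iff₀ hnR] at h2
    nlinarith
  simp only [hEE] at hzero
  linarith


lemma sfn_le {Φ : E → EReal} {p : E → E} (hproper : ∃ x, Φ x ≠ ⊤) (hbot : ∀ x, Φ x ≠ ⊥)
    (hconv : ∀ x y : E, ∀ t : ℝ, 0 ≤ t → t ≤ 1 →
      Φ (t • x + (1 - t) • y) ≤ (t : EReal) * Φ x + ((1 - t : ℝ) : EReal) * Φ y)
    (hprox : ∀ x u : E, u = p x ↔
      ∀ w, Φ u + ((‖u - x‖ ^ 2 / 2 : ℝ) : EReal) ≤ Φ w + ((‖w - x‖ ^ 2 / 2 : ℝ) : EReal))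
    (z x : E) :
    ((sfn Φ p z x : ℝ) : EReal) ≤ Φ x := by
  have sg : Φ (p z) + ((inner ℝ (z - p z) (x - p z) : ℝ) : EReal) ≤ Φ x :=
    subgrad_prox hproper hbot hconv hprox z x
  rw [env_coe hproper hbot hprox z] at sg
  have heq : sfn Φ p z x = (Φ (p z)).toReal + (inner ℝ (z - p z) (x - p z) : ℝ) := by
    unfold sfn env
    have h1 : (inner ℝ (z - p z) (x - z) : ℝ)
        = (inner ℝ (z - p z) (x - p z) : ℝ) + inner ℝ (z - p z) (p z - z) := by
      rw [← inner_add_right]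
      congr 1
      abel
    have h2 : (inner ℝ (z - p z) (p z - z) : ℝ) = -‖z - p z‖ ^ 2 := by
      rw [show p z - z = -(z - p z) by abel, inner_neg_right, real_inner_self_eq_norm_sq]
    have h3 : ‖p z - z‖ = ‖z - p z‖ := norm_sub_rev _ _
    rw [h1, h2, h3]
    ring
  rw [heq, EReal.coe_add]
  exact sg

lemma sfn_symm {Φ : E → EReal} {p : E → E} (hanti : ∀ x, p (-x) = -p x)
    (henv : ∀ x : E, env Φ p (-x) = env Φ p x) (z x : E) :
    sfn Φ p (-z) (-x) = sfn Φ p z x := by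
  unfold sfn
  rw [hanti z, henv z]
  have h1 : -z - -p z = -(z - p z) := by abel
  have h2 : -x - -z = -(x - z) := by abel
  rw [h1, h2, inner_neg_neg, norm_neg]

lemma exists_min_on {Φ : E → EReal} (hlsc : LowerSemicontinuous Φ) (q : E → ℝ)
    (hq : Continuous q) {B : Set E} (hBc : IsCompact B) (hBcl : IsClosed B)
    (hBne : B.Nonempty) :
    ∃ v ∈ B, ∀ w ∈ B, Φ v + ((q v : ℝ) : EReal) ≤ Φ w + ((q w : ℝ) : EReal) := by
  set g : E → EReal := fun w => Φ w + ((q w : ℝ) : EReal) with hg_def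
  have hg : LowerSemicontinuous g := by
    refine LowerSemicontinuous.add' hlsc
      (continuous_coe_real_ereal.comp hq).lowerSemicontinuous ?_
    intro w
    exact EReal.continuousAt_add (Or.inr (EReal.coe_ne_bot _)) (Or.inr (EReal.coe_ne_top _))
  have : Nonempty B := hBne.to_subtype
  set Z : B → Set E := fun w => B ∩ {v | g v ≤ g w} with hZ_def
  have hZcl : ∀ w : B, IsClosed (Z w) := fun w =>
    hBcl.inter (hg.isClosed_preimage (g w))
  have hZc : ∀ w : B, IsCompact (Z w) := fun w =>
    hBc.inter_right (hg.isClosed_preimage (g w))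
  have hZn : ∀ w : B, (Z w).Nonempty := fun w => ⟨w, w.2, by simp⟩
  have hZd : Directed (· ⊇ ·) Z := by
    intro i j
    rcases le_total (g i) (g j) with h | h
    · exact ⟨i, fun v hv => hv, fun v hv => ⟨hv.1, le_trans hv.2 h⟩⟩
    · exact ⟨j, fun v hv => ⟨hv.1, le_trans hv.2 h⟩, fun v hv => hv⟩
  obtain ⟨v, hv⟩ := IsCompact.nonempty_iInter_of_directed_nonempty_isCompact_isClosed
    Z hZd hZn hZc hZcl
  simp only [mem_iInter] at hv
  obtain ⟨w₀, hw₀⟩ := hBne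
  refine ⟨v, (hv ⟨w₀, hw₀⟩).1, fun w hw => (hv ⟨w, hw⟩).2⟩

-- prerequisites (proved elsewhere)







set_option maxHeartbeats 1600000 in
/-- Density of the sup of graph-affine minorants. -/
lemma exists_sfn_ge {Φ : E → EReal} {p : E → E} (hproper : ∃ x, Φ x ≠ ⊤)
    (hbot : ∀ x, Φ x ≠ ⊥) (hlsc : LowerSemicontinuous Φ)
    (hconv : ∀ x y : E, ∀ t : ℝ, 0 ≤ t → t ≤ 1 →
      Φ (t • x + (1 - t) • y) ≤ (t : EReal) * Φ x + ((1 - t : ℝ) : EReal) * Φ y)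
    (hprox : ∀ x u : E, u = p x ↔
      ∀ w, Φ u + ((‖u - x‖ ^ 2 / 2 : ℝ) : EReal) ≤ Φ w + ((‖w - x‖ ^ 2 / 2 : ℝ) : EReal))
    (x : E) (M : ℝ) (hM : (M : EReal) < Φ x) :
    ∃ z, M ≤ sfn Φ p z x := by
  classical
  -- base point and affine minorant
  obtain ⟨x₀, hx₀⟩ : ∃ x₀ : E, x₀ = p 0 := ⟨_, rfl⟩
  have h₀top : Φ x₀ ≠ ⊤ := hx₀ ▸ prox_ne_top hproper hprox 0
  obtain ⟨φ₀, hφ₀⟩ : ∃ r : ℝ, Φ x₀ = (r : EReal) :=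
    ⟨_, (EReal.coe_toReal h₀top (hbot x₀)).symm⟩
  obtain ⟨u₀, hu₀⟩ : ∃ u₀ : E, u₀ = -x₀ := ⟨_, rfl⟩
  have sg₀ : Subgrad Φ x₀ u₀ := by
    have := subgrad_prox hproper hbot hconv hprox (0 : E)
    rw [hu₀, hx₀]
    simpa [zero_sub] using this
  have hmin₀ : ∀ w : E, ((φ₀ + inner ℝ u₀ (w - x₀) : ℝ) : EReal) ≤ Φ w := by
    intro w
    have := sg₀ w
    rw [hφ₀] at this
    rw [EReal.coe_add]
    exact this
  -- lsc ball
  obtain ⟨δ, hδpos, hδ⟩ : ∃ δ > 0, ∀ ⦃w : E⦄, dist w x < δ → (M : EReal) < Φ w := by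
    have := hlsc x (M : EReal) hM
    rw [Metric.eventually_nhds_iff] at this
    obtain ⟨ε, hε, h⟩ := this
    exact ⟨ε, hε, fun w hw => h hw⟩
  obtain ⟨C, hC⟩ : ∃ C : ℝ, C = φ₀ + inner ℝ u₀ (x - x₀) := ⟨_, rfl⟩
  obtain ⟨K, hK_def⟩ : ∃ K : ℝ, K = max (M - C) 0 := ⟨_, rfl⟩
  have hK : 0 ≤ K := hK_def ▸ le_max_right _ _
  have hMK : M - C ≤ K := hK_def ▸ le_max_left _ _
  obtain ⟨A, hA_def⟩ : ∃ A : ℝ, A = ‖u₀‖ + K / δ + 1 := ⟨_, rfl⟩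
  have hA : 0 < A := by
    have h1 : 0 ≤ K / δ := div_nonneg hK hδpos.le
    have h2 := norm_nonneg u₀
    rw [hA_def]; linarith
  obtain ⟨lam, hlam, h2lamA⟩ : ∃ lam : ℝ, 0 < lam ∧ 2 * lam = δ / A :=
    ⟨δ / (2 * A), div_pos hδpos (by linarith), by field_simp⟩
  have h2lam : (0:ℝ) < 2 * lam := by linarith
  -- coercivity beyond δ
  have hcoer : ∀ r : ℝ, δ ≤ r → M ≤ C - ‖u₀‖ * r + r ^ 2 / (2 * lam) := by
    intro r hr
    have hrpos : 0 < r := lt_of_lt_of_le hδpos hr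
    have e1 : r ^ 2 / (2 * lam) = r ^ 2 * A / δ := by
      rw [h2lamA]; field_simp
    have e2 : r * A ≤ r ^ 2 * A / δ := by
      rw [← sub_nonneg]
      have : r ^ 2 * A / δ - r * A = r * A * (r - δ) / δ := by field_simp
      rw [this]
      exact div_nonneg (mul_nonneg (mul_nonneg hrpos.le hA.le) (by linarith)) hδpos.le
    have e3 : K ≤ r * (K / δ) := by
      have h1 : δ * (K / δ) = K := by field_simp
      nlinarith [div_nonneg hK hδpos.le]
    have e5 : r * A = r * ‖u₀‖ + r * (K / δ) + r := by rw [hA_def]; ring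
    linarith [e1, e2, e3, e5]
  -- radius for the compact ball
  obtain ⟨G₀, hG₀⟩ : ∃ G₀ : ℝ, G₀ = φ₀ + ‖x₀ - x‖ ^ 2 / (2 * lam) := ⟨_, rfl⟩
  obtain ⟨R, hR_def⟩ : ∃ R : ℝ,
      R = max 1 (max ‖x₀ - x‖ (2 * lam * (‖u₀‖ + |G₀ - C|))) := ⟨_, rfl⟩
  have hR1 : (1:ℝ) ≤ R := hR_def ▸ le_max_left _ _
  have hRx₀ : ‖x₀ - x‖ ≤ R := hR_def ▸ le_trans (le_max_left _ _) (le_max_right _ _)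
  have hR3 : 2 * lam * (‖u₀‖ + |G₀ - C|) ≤ R :=
    hR_def ▸ le_trans (le_max_right _ _) (le_max_right _ _)
  have hcoer2 : ∀ r : ℝ, R ≤ r → G₀ ≤ C - ‖u₀‖ * r + r ^ 2 / (2 * lam) := by
    intro r hr
    have hr1 : (1:ℝ) ≤ r := le_trans hR1 hr
    have hrpos : (0:ℝ) < r := by linarith
    have hB : ‖u₀‖ + |G₀ - C| ≤ r / (2 * lam) := by
      rw [le_div_iff₀ h2lam]
      calc (‖u₀‖ + |G₀ - C|) * (2 * lam) = 2 * lam * (‖u₀‖ + |G₀ - C|) := by ring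
        _ ≤ R := hR3
        _ ≤ r := hr
    have e1 : r ^ 2 / (2 * lam) = r * (r / (2 * lam)) := by ring
    have e2 : r * (‖u₀‖ + |G₀ - C|) ≤ r * (r / (2 * lam)) :=
      mul_le_mul_of_nonneg_left hB hrpos.le
    have e3 : |G₀ - C| ≤ r * |G₀ - C| := le_mul_of_one_le_left (abs_nonneg _) hr1
    have e4 : G₀ - C ≤ |G₀ - C| := le_abs_self _
    have e5 : r * (‖u₀‖ + |G₀ - C|) = r * ‖u₀‖ + r * |G₀ - C| := by ring
    linarith [e1, e2, e3, e4, e5]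
  -- global real lower bound on g
  have hlow : ∀ w : E, ((C - ‖u₀‖ * ‖w - x‖ + ‖w - x‖ ^ 2 / (2 * lam) : ℝ) : EReal)
      ≤ Φ w + ((‖w - x‖ ^ 2 / (2 * lam) : ℝ) : EReal) := by
    intro w
    have h1 : (inner ℝ u₀ (w - x₀) : ℝ) = inner ℝ u₀ (w - x) + inner ℝ u₀ (x - x₀) := by
      rw [← inner_add_right]
      congr 1
      abel
    have h2 : -(‖u₀‖ * ‖w - x‖) ≤ (inner ℝ u₀ (w - x) : ℝ) := by
      have ha1 := abs_real_inner_le_norm u₀ (w - x)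
      have ha2 := neg_abs_le (inner ℝ u₀ (w - x) : ℝ)
      linarith
    have hinner : C - ‖u₀‖ * ‖w - x‖ ≤ φ₀ + inner ℝ u₀ (w - x₀) := by
      rw [h1, hC]; linarith
    calc ((C - ‖u₀‖ * ‖w - x‖ + ‖w - x‖ ^ 2 / (2 * lam) : ℝ) : EReal)
        = ((C - ‖u₀‖ * ‖w - x‖ : ℝ) : EReal) + ((‖w - x‖ ^ 2 / (2 * lam) : ℝ) : EReal) :=
          EReal.coe_add _ _
      _ ≤ ((φ₀ + inner ℝ u₀ (w - x₀) : ℝ) : EReal) + ((‖w - x‖ ^ 2 / (2 * lam) : ℝ) : EReal) :=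
          add_le_add_left (EReal.coe_le_coe_iff.mpr hinner) _
      _ ≤ Φ w + ((‖w - x‖ ^ 2 / (2 * lam) : ℝ) : EReal) := add_le_add_left (hmin₀ w) _
  -- minimizer on the closed ball
  obtain ⟨v, hvB, hvmin⟩ := exists_min_on hlsc (fun w => ‖w - x‖ ^ 2 / (2 * lam))
    (by fun_prop) (isCompact_closedBall x R) Metric.isClosed_closedBall
    ⟨x, Metric.mem_closedBall_self (by linarith)⟩
  -- v is a global minimizer
  have hglobal : ∀ w : E, Φ v + ((‖v - x‖ ^ 2 / (2 * lam) : ℝ) : EReal)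
      ≤ Φ w + ((‖w - x‖ ^ 2 / (2 * lam) : ℝ) : EReal) := by
    intro w
    by_cases hw : w ∈ Metric.closedBall x R
    · exact hvmin w hw
    · have hwout : R < ‖w - x‖ := by
        rw [Metric.mem_closedBall, dist_eq_norm] at hw
        linarith [not_le.mp hw]
      have hx₀B : x₀ ∈ Metric.closedBall x R := by
        rw [Metric.mem_closedBall, dist_eq_norm]
        exact hRx₀
      have step1 : Φ v + ((‖v - x‖ ^ 2 / (2 * lam) : ℝ) : EReal)
          ≤ ((G₀ : ℝ) : EReal) := by
        have h1 := hvmin x₀ hx₀B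
        rw [hφ₀] at h1
        calc Φ v + ((‖v - x‖ ^ 2 / (2 * lam) : ℝ) : EReal)
            ≤ ((φ₀ : ℝ) : EReal) + ((‖x₀ - x‖ ^ 2 / (2 * lam) : ℝ) : EReal) := h1
          _ = ((G₀ : ℝ) : EReal) := by rw [hG₀, EReal.coe_add]
      have step2 : ((G₀ : ℝ) : EReal) ≤ Φ w + ((‖w - x‖ ^ 2 / (2 * lam) : ℝ) : EReal) := by
        refine le_trans ?_ (hlow w)
        exact EReal.coe_le_coe_iff.mpr (hcoer2 ‖w - x‖ hwout.le)
      exact le_trans step1 step2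
  -- subgradient at v
  have sgv : Subgrad Φ v (lam⁻¹ • (x - v)) := subgrad_of_min hproper hbot hconv hlam hglobal
  have hvtop : Φ v ≠ ⊤ := ne_top_of_min hproper hglobal
  obtain ⟨a, ha⟩ : ∃ r : ℝ, Φ v = (r : EReal) := ⟨_, (EReal.coe_toReal hvtop (hbot v)).symm⟩
  -- lower bound for the min value
  have hMa : M ≤ a + ‖v - x‖ ^ 2 / (2 * lam) := by
    by_cases hcase : dist v x < δ
    · have h1 := hδ hcase
      rw [ha] at h1
      have h2 : M < a := EReal.coe_lt_coe_iff.mp h1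
      have h3 : (0:ℝ) ≤ ‖v - x‖ ^ 2 / (2 * lam) := by positivity
      linarith
    · push_neg at hcase
      rw [dist_eq_norm] at hcase
      have h1 := hcoer ‖v - x‖ hcase
      have h2 : C - ‖u₀‖ * ‖v - x‖ ≤ a := by
        have h3 := hlow v
        rw [ha] at h3
        rw [← EReal.coe_add] at h3
        have hre := EReal.coe_le_coe_iff.mp h3
        linarith
      linarith
  -- construct z
  obtain ⟨z, hz_def⟩ : ∃ z : E, z = v + lam⁻¹ • (x - v) := ⟨_, rfl⟩
  have hpz : p z = v := by rw [hz_def]; exact prox_eq_of_subgrad hprox sgv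
  have hzv : z - v = lam⁻¹ • (x - v) := by rw [hz_def]; abel
  have hvz : v - z = -(lam⁻¹ • (x - v)) := by rw [hz_def]; abel
  have hxz : x - z = (1 - lam⁻¹) • (x - v) := by
    rw [hz_def, sub_smul, one_smul]; abel
  have hsfn : sfn Φ p z x = a + lam⁻¹ * ‖x - v‖ ^ 2 := by
    unfold sfn env
    rw [hpz, ha, EReal.toReal_coe]
    rw [hvz, hzv, hxz, norm_neg]
    rw [real_inner_smul_left, real_inner_smul_right, real_inner_self_eq_norm_sq]
    rw [norm_smul, Real.norm_eq_abs, abs_of_pos (by positivity : (0:ℝ) < lam⁻¹), mul_pow]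
    ring
  refine ⟨z, ?_⟩
  rw [hsfn]
  have hnorm : ‖v - x‖ = ‖x - v‖ := norm_sub_rev _ _
  have hhalf : ‖x - v‖ ^ 2 / (2 * lam) ≤ lam⁻¹ * ‖x - v‖ ^ 2 := by
    rw [div_le_iff₀ h2lam]
    have h1 : lam⁻¹ * lam = 1 := inv_mul_cancel₀ (ne_of_gt hlam)
    nlinarith [sq_nonneg ‖x - v‖]
  rw [hnorm] at hMa
  linarith


end SymmProxAux

/-- If the proximal operator of `Φ ∈ Γ₀(ℝ^N)` is antisymmetric, then the subdifferential is
symmetric (`u ∈ ∂Φ(x) ↔ −u ∈ ∂Φ(−x)`) and `Φ` itself is symmetric. -/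
theorem symm_of_prox_antisymm (N : ℕ) (Φ : EuclideanSpace ℝ (Fin N) → EReal)
    (hproper : ∃ x, Φ x ≠ ⊤) (hbot : ∀ x, Φ x ≠ ⊥)
    (hlsc : LowerSemicontinuous Φ)
    (hconv : ∀ x y : EuclideanSpace ℝ (Fin N), ∀ t : ℝ, 0 ≤ t → t ≤ 1 →
      Φ (t • x + (1 - t) • y) ≤ (t : EReal) * Φ x + ((1 - t : ℝ) : EReal) * Φ y)
    (p : EuclideanSpace ℝ (Fin N) → EuclideanSpace ℝ (Fin N))
    (hprox : ∀ x u : EuclideanSpace ℝ (Fin N), u = p x ↔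
      ∀ w, Φ u + ((‖u - x‖ ^ 2 / 2 : ℝ) : EReal) ≤ Φ w + ((‖w - x‖ ^ 2 / 2 : ℝ) : EReal))
    (hanti : ∀ x, p (-x) = -p x) :
    (∀ x u : EuclideanSpace ℝ (Fin N),
      (∀ y, Φ x + ((inner ℝ u (y - x) : ℝ) : EReal) ≤ Φ y) ↔
      (∀ y, Φ (-x) + ((inner ℝ (-u) (y - (-x)) : ℝ) : EReal) ≤ Φ y)) ∧
    (∀ x, Φ (-x) = Φ x) := by
  have hsymm : ∀ x u : EuclideanSpace ℝ (Fin N),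
      SymmProxAux.Subgrad Φ x u → SymmProxAux.Subgrad Φ (-x) (-u) := fun x u h =>
    SymmProxAux.subgrad_symm hproper hbot hconv hprox hanti h
  have henv : ∀ x, SymmProxAux.env Φ p (-x) = SymmProxAux.env Φ p x :=
    SymmProxAux.env_symm_of_bound Φ p
      (fun x y => SymmProxAux.envE_bound hproper hbot hconv hprox hanti x y)
  have hle : ∀ x, Φ x ≤ Φ (-x) := by
    intro x
    rw [← EReal.ge_of_forall_gt_iff_ge]
    intro M hM
    obtain ⟨z, hz⟩ := SymmProxAux.exists_sfn_ge hproper hbot hlsc hconv hprox x M hM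
    have h1 : SymmProxAux.sfn Φ p (-z) (-x) = SymmProxAux.sfn Φ p z x :=
      SymmProxAux.sfn_symm hanti henv z x
    calc (M : EReal) ≤ ((SymmProxAux.sfn Φ p z x : ℝ) : EReal) := EReal.coe_le_coe_iff.mpr hz
      _ = ((SymmProxAux.sfn Φ p (-z) (-x) : ℝ) : EReal) := by rw [h1]
      _ ≤ Φ (-x) := SymmProxAux.sfn_le hproper hbot hconv hprox (-z) (-x)
  constructor
  · intro x u
    constructor
    · exact fun h => hsymm x u h
    · intro h
      have h2 := hsymm (-x) (-u) h
      simpa [SymmProxAux.Subgrad] using h2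
  · intro x
    refine le_antisymm ?_ (hle x)
    have := hle (-x)
    simpa using this
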